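/- Let A → B → C be non-expansive homomorphisms of seminormed commutative rings. In the first fundamental exact sequence Ω_{B/A} ⊗_B C →(g) Ω_{C/A} →(f) Ω_{C/B} → 0, the maps g and f are non-expansive, where Ω_{B/A} ⊗_B C carries the tensor seminorm (of the Kähler seminorm on Ω_{B/A} and the seminorm of C) and Ω_{C/A}, Ω_{C/B} carry their Kähler seminorms; moreover f is strictly admissible, i.e., the quotient seminorm on Ω_{C/B} induced by the surjection f from the Kähler seminorm of Ω_{C/A} equals the Kähler seminorm of Ω_{C/B}. -/

import Mathlib

open scoped NNReal TensorProduct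

/-- A (nonarchimedean) seminorm on an additive group. -/
def IsGroupSeminorm {M : Type*} [AddCommGroup M] (f : M → ℝ≥0) : Prop :=
  f 0 = 0 ∧ ∀ x y : M, f (x - y) ≤ max (f x) (f y)

/-- A seminorm on a commutative ring. -/
def IsRingSeminorm {A : Type*} [CommRing A] (f : A → ℝ≥0) : Prop :=
  IsGroupSeminorm f ∧ f 1 = 1 ∧ ∀ x y : A, f (x * y) ≤ f x * f y

/-- The Kähler seminorm on `Ω[B⁄A]` induced by a seminorm `vB` on `B`. -/
noncomputable def kahlerSeminorm (A B : Type*) [CommRing A] [CommRing B] [Algebra A B]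
    (vB : B → ℝ≥0) (x : Ω[B⁄A]) : ℝ≥0 :=
  sInf { r | ∃ (n : ℕ) (c b : Fin n → B),
    x = ∑ i, c i • KaehlerDifferential.D A B (b i) ∧
    r = Finset.univ.sup fun i => vB (c i) * vB (b i) }

/-- The tensor seminorm on `M ⊗[A] N`. -/
noncomputable def tensorSeminorm (A M N : Type*) [CommRing A] [AddCommGroup M] [Module A M]
    [AddCommGroup N] [Module A N] (vM : M → ℝ≥0) (vN : N → ℝ≥0)
    (x : TensorProduct A M N) : ℝ≥0 :=
  sInf { r | ∃ (n : ℕ) (m : Fin n → M) (w : Fin n → N),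
    x = ∑ i, m i ⊗ₜ[A] w i ∧
    r = Finset.univ.sup fun i => vM (m i) * vN (w i) }

/-- The quotient seminorm induced by a (surjective) map `f : M → N` from a seminorm on `M`. -/
noncomputable def quotientSeminorm {M N : Type*} (f : M → N) (v : M → ℝ≥0) (y : N) : ℝ≥0 :=
  sInf { r | ∃ x : M, f x = y ∧ r = v x }

section aux
variable {A C : Type*} [CommRing A] [CommRing C] [Algebra A C] (vC : C → ℝ≥0)

lemma kahler_exists_rep (z : Ω[C⁄A]) :
    ∃ (n : ℕ) (c b : Fin n → C), z = ∑ i, c i • KaehlerDifferential.D A C (b i) := by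
  have hz : z ∈ Submodule.span C (Set.range (KaehlerDifferential.D A C)) := by
    rw [KaehlerDifferential.span_range_derivation]; trivial
  rw [Submodule.mem_span_set'] at hz
  obtain ⟨n, c, gg, hgg⟩ := hz
  refine ⟨n, c, fun i => (gg i).2.choose, ?_⟩
  rw [← hgg]
  refine Finset.sum_congr rfl fun i _ => ?_
  rw [((gg i).2.choose_spec : KaehlerDifferential.D A C _ = _)]

lemma kahler_nonempty (z : Ω[C⁄A]) :
    Set.Nonempty { r | ∃ (n : ℕ) (c b : Fin n → C),
      z = ∑ i, c i • KaehlerDifferential.D A C (b i) ∧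
      r = Finset.univ.sup fun i => vC (c i) * vC (b i) } := by
  obtain ⟨n, c, b, h⟩ := kahler_exists_rep z
  exact ⟨_, n, c, b, h, rfl⟩

lemma kahler_le_of_rep {ι : Type*} [Fintype ι] (z : Ω[C⁄A]) (t : ℝ≥0)
    (c b : ι → C) (hz : z = ∑ i, c i • KaehlerDifferential.D A C (b i))
    (ht : ∀ i, vC (c i) * vC (b i) ≤ t) :
    kahlerSeminorm A C vC z ≤ t := by
  set e := (Fintype.equivFin ι).symm
  have hz' : z = ∑ j, c (e j) • KaehlerDifferential.D A C (b (e j)) := by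
    rw [hz, ← Equiv.sum_comp e (fun i => c i • KaehlerDifferential.D A C (b i))]
  refine le_trans (csInf_le (OrderBot.bddBelow _) ⟨_, _, _, hz', rfl⟩) ?_
  exact Finset.sup_le fun j _ => ht (e j)

end aux

section aux2
variable {A B C : Type*} [CommRing A] [CommRing B] [CommRing C]
    [Algebra A B] [Algebra A C] [Algebra B C] [IsScalarTower A B C] (vC : C → ℝ≥0)

lemma map_nonexpansive (x : Ω[C⁄A]) :
    kahlerSeminorm B C vC (KaehlerDifferential.map A B C C x) ≤ kahlerSeminorm A C vC x := by
  refine le_csInf (kahler_nonempty vC x) ?_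
  rintro r ⟨n, c, b, hx, rfl⟩
  refine kahler_le_of_rep vC _ _ c b ?_
    (fun i => Finset.le_sup (f := fun i => vC (c i) * vC (b i)) (Finset.mem_univ i))
  rw [hx, map_sum]
  refine Finset.sum_congr rfl fun i _ => ?_
  rw [LinearMap.map_smul, KaehlerDifferential.map_D]
  simp

end aux2

/-- First fundamental sequence for non-expansive homomorphisms `A → B → C` of seminormed rings:
in `Ω_{B/A} ⊗_B C →(g) Ω_{C/A} →(f) Ω_{C/B} → 0`, the maps `g` (characterized by
`g((b' • d b) ⊗ c) = (c * b') • d b` in `Ω_{C/A}`) and `f = KaehlerDifferential.map` are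
non-expansive, and `f` is strictly admissible: the quotient seminorm induced by `f` from the
Kähler seminorm of `Ω_{C/A}` equals the Kähler seminorm of `Ω_{C/B}`. -/
theorem first_fundamental_sequence_nonexpansive_strictly_admissible
    {A B C : Type*} [CommRing A] [CommRing B] [CommRing C]
    [Algebra A B] [Algebra A C] [Algebra B C] [IsScalarTower A B C]
    (vA : A → ℝ≥0) (vB : B → ℝ≥0) (vC : C → ℝ≥0)
    (hA : IsRingSeminorm vA) (hB : IsRingSeminorm vB) (hC : IsRingSeminorm vC)
    (hAB : ∀ a : A, vB (algebraMap A B a) ≤ vA a)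
    (hBC : ∀ b : B, vC (algebraMap B C b) ≤ vB b)
    (g : TensorProduct B (Ω[B⁄A]) C →+ Ω[C⁄A])
    (hg : ∀ (b' b : B) (c : C),
      g ((b' • KaehlerDifferential.D A B b) ⊗ₜ[B] c)
        = (c * algebraMap B C b') • KaehlerDifferential.D A C (algebraMap B C b)) :
    (∀ x, kahlerSeminorm A C vC (g x)
        ≤ tensorSeminorm B (Ω[B⁄A]) C (kahlerSeminorm A B vB) vC x) ∧
    (∀ x : Ω[C⁄A],
        kahlerSeminorm B C vC (KaehlerDifferential.map A B C C x) ≤ kahlerSeminorm A C vC x) ∧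
    (∀ y : Ω[C⁄B],
        quotientSeminorm (KaehlerDifferential.map A B C C) (kahlerSeminorm A C vC) y
          = kahlerSeminorm B C vC y) := by
  refine ⟨?_, fun x => map_nonexpansive vC x, ?_⟩
  · -- g non-expansive
    intro x
    -- tensor set is nonempty
    have hne : Set.Nonempty { r | ∃ (n : ℕ) (m : Fin n → Ω[B⁄A]) (w : Fin n → C),
        x = ∑ i, m i ⊗ₜ[B] w i ∧
        r = Finset.univ.sup fun i => kahlerSeminorm A B vB (m i) * vC (w i) } := by
      obtain ⟨S, hS⟩ := TensorProduct.exists_finset x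
      set e := S.equivFin
      refine ⟨_, S.card, fun j => (e.symm j).1.1, fun j => (e.symm j).1.2, ?_, rfl⟩
      rw [hS, ← Finset.sum_coe_sort S]
      exact (Equiv.sum_comp e.symm fun p : S => p.1.1 ⊗ₜ[B] p.1.2).symm
    refine le_csInf hne ?_
    rintro r ⟨n, m, w, hx, rfl⟩
    refine le_of_forall_gt_imp_ge_of_dense fun t ht => ?_
    have hchoice : ∀ i : Fin n, ∃ (k : ℕ) (c b : Fin k → B),
        m i = ∑ j, c j • KaehlerDifferential.D A B (b j) ∧
        ∀ j, vC (w i) * (vB (c j) * vB (b j)) ≤ t := by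
      intro i
      have hi : kahlerSeminorm A B vB (m i) * vC (w i) < t :=
        lt_of_le_of_lt (Finset.le_sup (f := fun i => kahlerSeminorm A B vB (m i) * vC (w i))
          (Finset.mem_univ i)) ht
      rcases eq_or_ne (vC (w i)) 0 with h0 | h0
      · obtain ⟨k, c, b, hrep⟩ := kahler_exists_rep (A := A) (C := B) (m i)
        exact ⟨k, c, b, hrep, fun j => by simp [h0]⟩
      · have hlt : kahlerSeminorm A B vB (m i) < t / vC (w i) :=
          (lt_div_iff₀ (pos_iff_ne_zero.2 h0)).2 hi
        obtain ⟨r', hr', hrt⟩ := exists_lt_of_csInf_lt (kahler_nonempty vB (m i)) hlt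
        obtain ⟨k, c, b, hrep, rfl⟩ := hr'
        refine ⟨k, c, b, hrep, fun j => ?_⟩
        have h1 : vB (c j) * vB (b j) ≤ _ := Finset.le_sup (f := fun j => vB (c j) * vB (b j))
          (Finset.mem_univ j)
        calc vC (w i) * (vB (c j) * vB (b j)) ≤ vC (w i) * (t / vC (w i)) :=
              mul_le_mul_right (le_trans h1 hrt.le) _
          _ = t := by rw [mul_comm]; exact div_mul_cancel₀ t h0
    choose k c b hrep hbound using hchoice
    have hx' : (g x : Ω[C⁄A]) = ∑ p : (Σ i : Fin n, Fin (k i)),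
        (w p.1 * algebraMap B C (c p.1 p.2)) •
          KaehlerDifferential.D A C (algebraMap B C (b p.1 p.2)) := by
      rw [← Finset.univ_sigma_univ, Finset.sum_sigma, hx, map_sum]
      refine Finset.sum_congr rfl fun i _ => ?_
      rw [hrep i, TensorProduct.sum_tmul, map_sum]
      exact Finset.sum_congr rfl fun j _ => hg _ _ _
    refine kahler_le_of_rep vC _ t _ _ hx' fun p => ?_
    calc vC (w p.1 * algebraMap B C (c p.1 p.2)) * vC (algebraMap B C (b p.1 p.2))
        ≤ vC (w p.1) * vC (algebraMap B C (c p.1 p.2)) * vC (algebraMap B C (b p.1 p.2)) :=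
          mul_le_mul_left (hC.2.2 _ _) _
      _ ≤ vC (w p.1) * vB (c p.1 p.2) * vB (b p.1 p.2) :=
          mul_le_mul' (mul_le_mul_right (hBC _) _) (hBC _)
      _ = vC (w p.1) * (vB (c p.1 p.2) * vB (b p.1 p.2)) := mul_assoc _ _ _
      _ ≤ t := hbound p.1 p.2
  · -- strict admissibility
    intro y
    refine le_antisymm ?_ ?_
    · refine le_csInf (kahler_nonempty vC y) ?_
      rintro r ⟨n, c, b, hy, rfl⟩
      set x : Ω[C⁄A] := ∑ i, c i • KaehlerDifferential.D A C (b i) with hxdef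
      have hfx : KaehlerDifferential.map A B C C x = y := by
        rw [hxdef, map_sum, hy]
        refine Finset.sum_congr rfl fun i _ => ?_
        rw [LinearMap.map_smul, KaehlerDifferential.map_D]
        simp
      refine le_trans (csInf_le (OrderBot.bddBelow _) ⟨x, hfx, rfl⟩) ?_
      exact kahler_le_of_rep vC x _ c b hxdef
        fun i => Finset.le_sup (f := fun i => vC (c i) * vC (b i)) (Finset.mem_univ i)
    · have hsurj : Function.Surjective (KaehlerDifferential.map A B C C) :=
        KaehlerDifferential.map_surjective A B C
      obtain ⟨x0, hx0⟩ := hsurj y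
      refine le_csInf ⟨_, x0, hx0, rfl⟩ ?_
      rintro r ⟨x, hx, rfl⟩
      rw [← hx]
      exact map_nonexpansive vC x
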